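/- Let H, H₁, …, H_t be induced subgraphs of a graph G such that G = H ∪ H₁ ∪ … ∪ H_t; H_i ∩ H_j ⊆ H whenever 1 ≤ i < j ≤ t; and H_i ∩ H is a clique for each i. Then td(G) ≤ td(H) + max over i of td(H_i − V(H)). -/

import Mathlib

/-- `le` is the (reflexive) ancestor order of a rooted forest on the vertices of
`G` in which every edge of `G` joins a vertex to an ancestor or descendant:
it is a partial order whose principal down-sets are chains, and every edge of
`G` is comparable. -/
def IsForestOrder {V : Type} (G : SimpleGraph V) (le : V → V → Prop) : Prop :=
  Reflexive le ∧ Transitive le ∧ AntiSymmetric le ∧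
    (∀ v x y, le x v → le y v → le x y ∨ le y x) ∧
    ∀ ⦃u v : V⦄, G.Adj u v → le u v ∨ le v u

/-- `G` has treedepth at most `n`: there is a rooted forest of depth at most
`n - 1` on `V(G)` (each vertex has at most `n` ancestors, itself included)
whose ancestor-descendant pairs cover all edges of `G`. -/
def TreedepthLE {V : Type} (G : SimpleGraph V) (n : ℕ) : Prop :=
  ∃ le : V → V → Prop, IsForestOrder G le ∧ ∀ v, {u | le u v}.ncard ≤ n

/-- The treedepth of `G`. -/
noncomputable def treedepth {V : Type} (G : SimpleGraph V) : ℕ :=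
  sInf {n | TreedepthLE G n}

lemma exists_chain_max {α : Type} (r : α → α → Prop) (htrans : Transitive r)
    (S : Finset α) (hS : S.Nonempty) :
    (∀ a ∈ S, ∀ b ∈ S, r a b ∨ r b a) → ∃ c ∈ S, ∀ a ∈ S, r a c := by
  induction hS using Finset.Nonempty.cons_induction with
  | singleton a =>
    intro hchain
    refine ⟨a, by simp, fun x hx => ?_⟩
    simp only [Finset.mem_singleton] at hx; subst hx
    rcases hchain x (by simp) x (by simp) with h | h <;> exact h
  | cons a s ha hs ih =>
    intro hchain
    have hsub : ∀ x ∈ s, x ∈ Finset.cons a s ha := fun x hx => Finset.mem_cons_of_mem hx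
    obtain ⟨c, hc, hcmax⟩ := ih (fun x hx y hy => hchain x (hsub x hx) y (hsub y hy))
    rcases hchain a (Finset.mem_cons_self a s) c (hsub c hc) with h | h
    · refine ⟨c, hsub c hc, fun x hx => ?_⟩
      rcases Finset.mem_cons.mp hx with rfl | hx
      · exact h
      · exact hcmax x hx
    · refine ⟨a, Finset.mem_cons_self a s, fun x hx => ?_⟩
      rcases Finset.mem_cons.mp hx with rfl | hx
      · rcases hchain x (by simp) x (by simp) with h' | h' <;> exact h'
      · exact htrans (hcmax x hx) h

lemma treedepthLE_treedepth {W : Type} [Fintype W] (G' : SimpleGraph W) :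
    TreedepthLE G' (treedepth G') := by
  have hne : TreedepthLE G' (Fintype.card W) := by
    let e := Fintype.equivFin W
    refine ⟨fun u v => e u ≤ e v, ⟨fun u => le_refl _, fun a b c h1 h2 => le_trans h1 h2,
      fun a b h1 h2 => e.injective (le_antisymm h1 h2),
      fun v x y _ _ => le_total _ _, fun u v _ => le_total _ _⟩, ?_⟩
    intro v
    calc ({u | e u ≤ e v}).ncard ≤ (Set.univ : Set W).ncard :=
          Set.ncard_le_ncard (Set.subset_univ _) Set.finite_univ
      _ = Fintype.card W := by rw [Set.ncard_univ, Nat.card_eq_fintype_card]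
  exact Nat.sInf_mem (s := {n | TreedepthLE G' n}) ⟨_, hne⟩

/-- Let `H, H₁, …, H_t` be induced subgraphs of `G` with `G = H ∪ H₁ ∪ ⋯ ∪ H_t`,
`H_i ∩ H_j ⊆ H` for `i ≠ j`, and `H_i ∩ H` a clique for each `i`.  Then
`td(G) ≤ td(H) + max_i td(H_i − V(H))`. -/
theorem treedepth_glue {V : Type} [Fintype V] (G : SimpleGraph V) (t : ℕ)
    (H : G.Subgraph) (Hs : Fin t → G.Subgraph)
    (hHind : H.IsInduced) (hHsind : ∀ i, (Hs i).IsInduced)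
    (hunion : H ⊔ (⨆ i, Hs i) = ⊤)
    (hinter : ∀ i j, i ≠ j → Hs i ⊓ Hs j ≤ H)
    (hclique : ∀ i, ∀ u ∈ (Hs i).verts ∩ H.verts, ∀ v ∈ (Hs i).verts ∩ H.verts,
      u ≠ v → G.Adj u v) :
    treedepth G ≤ treedepth H.coe +
      Finset.univ.sup fun i => treedepth ((Hs i).deleteVerts H.verts).coe := by
  classical
  obtain ⟨leH, ⟨hHrefl, hHtrans, hHanti, hHchain, hHedge⟩, hHcard⟩ :=
    treedepthLE_treedepth H.coe
  set m := Finset.univ.sup (fun i => treedepth ((Hs i).deleteVerts H.verts).coe) with hm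
  choose leD hDf hDcard using
    fun i : Fin t => treedepthLE_treedepth ((Hs i).deleteVerts H.verts).coe
  have hcover : ∀ v : V, v ∉ H.verts → ∃ i, v ∈ (Hs i).verts := by
    intro v hv
    have hmem : v ∈ (⊤ : G.Subgraph).verts := trivial
    rw [← hunion] at hmem
    rw [SimpleGraph.Subgraph.verts_sup, SimpleGraph.Subgraph.verts_iSup] at hmem
    rcases hmem with h | h
    · exact absurd h hv
    · simpa using h
  have huniq : ∀ (i j : Fin t) (v : V), v ∉ H.verts → v ∈ (Hs i).verts →
      v ∈ (Hs j).verts → i = j := by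
    intro i j v hv hi hj
    by_contra hij
    exact hv ((hinter i j hij).1 ⟨hi, hj⟩)
  have hCchain : ∀ (i : Fin t) (u v : H.verts), (u : V) ∈ (Hs i).verts →
      (v : V) ∈ (Hs i).verts → leH u v ∨ leH v u := by
    intro i u v hu hv
    by_cases huv : (u : V) = (v : V)
    · have h : u = v := Subtype.ext huv
      subst h; exact Or.inl (hHrefl u)
    · have hadj : G.Adj u v := hclique i u ⟨hu, u.2⟩ v ⟨hv, v.2⟩ huv
      exact hHedge (hHind u.2 v.2 hadj)
  set le : V → V → Prop := fun u v =>
    (∃ (hu : u ∈ H.verts) (hv : v ∈ H.verts), leH ⟨u, hu⟩ ⟨v, hv⟩) ∨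
    (v ∉ H.verts ∧ ∃ i : Fin t, v ∈ (Hs i).verts ∧
      ∃ (w : V) (hw : w ∈ H.verts), w ∈ (Hs i).verts ∧
        ∃ (hu : u ∈ H.verts), leH ⟨u, hu⟩ ⟨w, hw⟩) ∨
    (∃ (i : Fin t) (hu : u ∈ ((Hs i).deleteVerts H.verts).verts)
      (hv : v ∈ ((Hs i).deleteVerts H.verts).verts), leD i ⟨u, hu⟩ ⟨v, hv⟩) with hle
  have hrefl : Reflexive le := by
    intro v
    by_cases hv : v ∈ H.verts
    · exact Or.inl ⟨hv, hv, hHrefl _⟩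
    · obtain ⟨i, hi⟩ := hcover v hv
      exact Or.inr (Or.inr ⟨i, ⟨hi, hv⟩, ⟨hi, hv⟩, (hDf i).1 _⟩)
  have htrans : Transitive le := by
    rintro u v w huv hvw
    rcases huv with ⟨hu, hv, h1⟩ | ⟨hvn, i, hvi, x, hxH, hxi, hu, h1⟩ | ⟨i, hui, hvi, h1⟩
    · rcases hvw with ⟨hv', hw, h2⟩ | ⟨hwn, j, hwj, y, hyH, hyj, hv', h2⟩ | ⟨j, hvj, hwj, h2⟩
      · exact Or.inl ⟨hu, hw, hHtrans h1 h2⟩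
      · exact Or.inr (Or.inl ⟨hwn, j, hwj, y, hyH, hyj, hu, hHtrans h1 h2⟩)
      · exact absurd hv hvj.2
    · rcases hvw with ⟨hv', hw, h2⟩ | ⟨hwn, j, hwj, y, hyH, hyj, hv', h2⟩ | ⟨j, hvj, hwj, h2⟩
      · exact absurd hv' hvn
      · exact absurd hv' hvn
      · have hij : i = j := huniq i j v hvn hvi hvj.1
        subst hij
        exact Or.inr (Or.inl ⟨hwj.2, i, hwj.1, x, hxH, hxi, hu, h1⟩)
    · rcases hvw with ⟨hv', hw, h2⟩ | ⟨hwn, j, hwj, y, hyH, hyj, hv', h2⟩ | ⟨j, hvj, hwj, h2⟩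
      · exact absurd hv' hvi.2
      · exact absurd hv' hvi.2
      · have hij : i = j := huniq i j v hvi.2 hvi.1 hvj.1
        subst hij
        exact Or.inr (Or.inr ⟨i, hui, hwj, (hDf i).2.1 h1 h2⟩)
  have hanti : AntiSymmetric le := by
    rintro u v huv hvu
    rcases huv with ⟨hu, hv, h1⟩ | ⟨hvn, i, hvi, x, hxH, hxi, hu, h1⟩ | ⟨i, hui, hvi, h1⟩
    · rcases hvu with ⟨hv', hu', h2⟩ | ⟨hun, _⟩ | ⟨j, hvj, huj, h2⟩
      · exact congrArg Subtype.val (hHanti h1 h2)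
      · exact absurd hu hun
      · exact absurd hu huj.2
    · rcases hvu with ⟨hv', _, _⟩ | ⟨hun, _⟩ | ⟨j, hvj, huj, h2⟩
      · exact absurd hv' hvn
      · exact absurd hu hun
      · exact absurd hu huj.2
    · rcases hvu with ⟨hv', _, _⟩ | ⟨hun, j, huj, w, hwH, hwj, hv', h2⟩ | ⟨j, hvj, huj, h2⟩
      · exact absurd hv' hvi.2
      · exact absurd hv' hvi.2
      · have hij : i = j := huniq i j v hvi.2 hvi.1 hvj.1
        subst hij
        exact congrArg Subtype.val ((hDf i).2.2.1 h1 h2)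
  have hchainp : ∀ v x y, le x v → le y v → le x y ∨ le y x := by
    intro v x y hxv hyv
    rcases hxv with ⟨hx, hv, h1⟩ | ⟨hvn, i, hvi, w1, hw1H, hw1i, hx, h1⟩ | ⟨i, hxi, hvi, h1⟩
    · rcases hyv with ⟨hy, hv', h2⟩ | ⟨hvn', _⟩ | ⟨j, hyj, hvj, h2⟩
      · rcases hHchain ⟨v, hv⟩ ⟨x, hx⟩ ⟨y, hy⟩ h1 h2 with h | h
        · exact Or.inl (Or.inl ⟨hx, hy, h⟩)
        · exact Or.inr (Or.inl ⟨hy, hx, h⟩)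
      · exact absurd hv hvn'
      · exact absurd hv hvj.2
    · rcases hyv with ⟨hy, hv', h2⟩ | ⟨hvn', j, hvj, w2, hw2H, hw2j, hy, h2⟩ | ⟨j, hyj, hvj, h2⟩
      · exact absurd hv' hvn
      · have hij : i = j := huniq i j v hvn hvi hvj
        subst hij
        rcases hCchain i ⟨w1, hw1H⟩ ⟨w2, hw2H⟩ hw1i hw2j with hw | hw
        · rcases hHchain ⟨w2, hw2H⟩ ⟨x, hx⟩ ⟨y, hy⟩ (hHtrans h1 hw) h2 with h | h
          · exact Or.inl (Or.inl ⟨hx, hy, h⟩)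
          · exact Or.inr (Or.inl ⟨hy, hx, h⟩)
        · rcases hHchain ⟨w1, hw1H⟩ ⟨x, hx⟩ ⟨y, hy⟩ h1 (hHtrans h2 hw) with h | h
          · exact Or.inl (Or.inl ⟨hx, hy, h⟩)
          · exact Or.inr (Or.inl ⟨hy, hx, h⟩)
      · have hij : i = j := huniq i j v hvn hvi hvj.1
        subst hij
        exact Or.inl (Or.inr (Or.inl ⟨hyj.2, i, hyj.1, w1, hw1H, hw1i, hx, h1⟩))
    · rcases hyv with ⟨hy, hv', h2⟩ | ⟨hvn', j, hvj, w2, hw2H, hw2j, hy, h2⟩ | ⟨j, hyj, hvj, h2⟩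
      · exact absurd hv' hvi.2
      · have hij : j = i := huniq j i v hvn' hvj hvi.1
        subst hij
        exact Or.inr (Or.inr (Or.inl ⟨hxi.2, j, hxi.1, w2, hw2H, hw2j, hy, h2⟩))
      · have hij : i = j := huniq i j v hvi.2 hvi.1 hvj.1
        subst hij
        rcases (hDf i).2.2.2.1 ⟨v, hvi⟩ ⟨x, hxi⟩ ⟨y, hyj⟩ h1 h2 with h | h
        · exact Or.inl (Or.inr (Or.inr ⟨i, hxi, hyj, h⟩))
        · exact Or.inr (Or.inr (Or.inr ⟨i, hyj, hxi, h⟩))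
  have hedge : ∀ ⦃u v : V⦄, G.Adj u v → le u v ∨ le v u := by
    intro u v hadj
    have hadj' : (H ⊔ ⨆ i, Hs i).Adj u v := by rw [hunion]; exact hadj
    rcases SimpleGraph.Subgraph.sup_adj.mp hadj' with hH | hI
    · have hu := hH.fst_mem
      have hv := hH.snd_mem
      rcases hHedge (show H.coe.Adj ⟨u, hu⟩ ⟨v, hv⟩ from hH) with h | h
      · exact Or.inl (Or.inl ⟨hu, hv, h⟩)
      · exact Or.inr (Or.inl ⟨hv, hu, h⟩)
    · obtain ⟨i, hAdj⟩ := SimpleGraph.Subgraph.iSup_adj.mp hI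
      have hui : u ∈ (Hs i).verts := hAdj.fst_mem
      have hvi : v ∈ (Hs i).verts := hAdj.snd_mem
      by_cases hu : u ∈ H.verts <;> by_cases hv : v ∈ H.verts
      · rcases hHedge (show H.coe.Adj ⟨u, hu⟩ ⟨v, hv⟩ from hHind hu hv hadj) with h | h
        · exact Or.inl (Or.inl ⟨hu, hv, h⟩)
        · exact Or.inr (Or.inl ⟨hv, hu, h⟩)
      · exact Or.inl (Or.inr (Or.inl ⟨hv, i, hvi, u, hu, hui, hu, hHrefl _⟩))
      · exact Or.inr (Or.inr (Or.inl ⟨hu, i, hui, v, hv, hvi, hv, hHrefl _⟩))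
      · have hD : ((Hs i).deleteVerts H.verts).Adj u v :=
          SimpleGraph.Subgraph.deleteVerts_adj.mpr ⟨hui, hu, hvi, hv, hAdj⟩
        rcases (hDf i).2.2.2.2
            (show ((Hs i).deleteVerts H.verts).coe.Adj ⟨u, ⟨hui, hu⟩⟩ ⟨v, ⟨hvi, hv⟩⟩ from hD)
            with h | h
        · exact Or.inl (Or.inr (Or.inr ⟨i, ⟨hui, hu⟩, ⟨hvi, hv⟩, h⟩))
        · exact Or.inr (Or.inr (Or.inr ⟨i, ⟨hvi, hv⟩, ⟨hui, hu⟩, h⟩))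
  have hcard : ∀ v, {u | le u v}.ncard ≤ treedepth H.coe + m := by
    intro v
    by_cases hv : v ∈ H.verts
    · have heq : {u | le u v} = Subtype.val '' {u' : H.verts | leH u' ⟨v, hv⟩} := by
        ext u
        constructor
        · rintro (⟨hu, hv', h⟩ | ⟨hvn, _⟩ | ⟨i, _, hvi, _⟩)
          · exact ⟨⟨u, hu⟩, h, rfl⟩
          · exact absurd hv hvn
          · exact absurd hv hvi.2
        · rintro ⟨⟨u', hu'⟩, h, rfl⟩
          exact Or.inl ⟨hu', hv, h⟩
      rw [heq, Set.ncard_image_of_injective _ Subtype.val_injective]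
      exact le_trans (hHcard ⟨v, hv⟩) (Nat.le_add_right _ _)
    · obtain ⟨i, hi⟩ := hcover v hv
      have hsub : {u | le u v} ⊆
          (Subtype.val '' {u' : H.verts | ∃ (w : V) (hw : w ∈ H.verts),
            w ∈ (Hs i).verts ∧ leH u' ⟨w, hw⟩}) ∪
          (Subtype.val '' {u' : ((Hs i).deleteVerts H.verts).verts |
            leD i u' ⟨v, ⟨hi, hv⟩⟩}) := by
        rintro u (⟨hu, hv', h⟩ | ⟨hvn, j, hvj, w, hwH, hwj, hu, h⟩ | ⟨j, huj, hvj, h⟩)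
        · exact absurd hv' hv
        · have hij : j = i := huniq j i v hv hvj hi
          subst hij
          exact Or.inl ⟨⟨u, hu⟩, ⟨w, hwH, hwj, h⟩, rfl⟩
        · have hij : j = i := huniq j i v hvj.2 hvj.1 hi
          subst hij
          exact Or.inr ⟨⟨u, huj⟩, h, rfl⟩
      have hA : (Subtype.val '' {u' : H.verts | ∃ (w : V) (hw : w ∈ H.verts),
          w ∈ (Hs i).verts ∧ leH u' ⟨w, hw⟩}).ncard ≤ treedepth H.coe := by
        rw [Set.ncard_image_of_injective _ Subtype.val_injective]
        set S := {u' : H.verts | ∃ (w : V) (hw : w ∈ H.verts),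
          w ∈ (Hs i).verts ∧ leH u' ⟨w, hw⟩} with hS
        rcases S.eq_empty_or_nonempty with hSe | ⟨u0, hu0⟩
        · simp [hSe]
        · obtain ⟨w0, hw0H, hw0i, _⟩ := hu0
          have hCfin : {w : H.verts | (w : V) ∈ (Hs i).verts}.Finite := Set.toFinite _
          obtain ⟨c, hcC, hcmax⟩ := exists_chain_max leH hHtrans hCfin.toFinset
            ⟨⟨w0, hw0H⟩, by simpa [Set.Finite.mem_toFinset] using hw0i⟩
            (by
              intro a ha b hb
              rw [Set.Finite.mem_toFinset] at ha hb
              exact hCchain i a b ha hb)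
          have hsub2 : S ⊆ {u' | leH u' c} := by
            rintro u' ⟨w, hwH, hwi, h⟩
            exact hHtrans h (hcmax ⟨w, hwH⟩ (by simpa [Set.Finite.mem_toFinset] using hwi))
          exact le_trans (Set.ncard_le_ncard hsub2 (Set.toFinite _)) (hHcard c)
      have hB : (Subtype.val '' {u' : ((Hs i).deleteVerts H.verts).verts |
          leD i u' ⟨v, ⟨hi, hv⟩⟩}).ncard ≤ m := by
        rw [Set.ncard_image_of_injective _ Subtype.val_injective]
        rw [hm]
        exact le_trans (hDcard i ⟨v, ⟨hi, hv⟩⟩) (Finset.le_sup (f := fun i => treedepth ((Hs i).deleteVerts H.verts).coe) (Finset.mem_univ i))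
      calc {u | le u v}.ncard ≤ _ := Set.ncard_le_ncard hsub (Set.toFinite _)
        _ ≤ _ + _ := Set.ncard_union_le _ _
        _ ≤ treedepth H.coe + m := Nat.add_le_add hA hB
  exact Nat.sInf_le ⟨le, ⟨hrefl, htrans, hanti, hchainp, hedge⟩, hcard⟩
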